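/- For every j ∈ {1,2}, every real parameters a, c, and every Q ≠ P in ℝ², the divergence of the j-th column of the parameterized family satisfies ∑_{k=1}^{2} ∂H̃^{a,c}_{kj}(Q,P)/∂q_k = (2a + 32c + 1/2) R_j; in particular this column is divergence-free for all Q ≠ P if and only if a + 16c = −1/4. -/

import Mathlib

open Real

/-- Partial derivative of a scalar function on ℝ² with respect to the `l`-th coordinate. -/
noncomputable def pd2 (f : EuclideanSpace ℝ (Fin 2) → ℝ) (l : Fin 2)
    (Q : EuclideanSpace ℝ (Fin 2)) : ℝ :=
  fderiv ℝ f Q (EuclideanSpace.single l 1)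

/-- The parameterized 2D family
H̃^{a,c}_{kj}(Q,P) = δ_{kj} r² (a − (1/2) log r) + ∂²/∂q_k∂q_j [ r⁴ (c + (1/32) log r) ]. -/
noncomputable def Hac (P : EuclideanSpace ℝ (Fin 2)) (a c : ℝ) (k j : Fin 2)
    (Q : EuclideanSpace ℝ (Fin 2)) : ℝ :=
  (if k = j then (1 : ℝ) else 0) * ‖Q - P‖ ^ 2 * (a - (1 / 2) * Real.log ‖Q - P‖) +
    pd2 (fun Q' =>
      pd2 (fun Q'' => ‖Q'' - P‖ ^ 4 * (c + (1 / 32) * Real.log ‖Q'' - P‖)) j Q') k Q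

section helpers
local notation "E2" => EuclideanSpace ℝ (Fin 2)

lemma hasFDerivAt_S (P Q : E2) :
    HasFDerivAt (fun Q' : E2 => ‖Q' - P‖ ^ 2) (2 • (innerSL ℝ (Q - P))) Q := by
  simpa using ((hasFDerivAt_id Q).sub_const P).norm_sq

lemma apply_single (v : E2) (l : Fin 2) :
    (2 • (innerSL ℝ v)) (EuclideanSpace.single l 1) = 2 * v l := by
  fin_cases l <;> simp [EuclideanSpace.inner_single_right]

lemma hasFDerivAt_comp_S (P Q : E2) {g : ℝ → ℝ} {g' : ℝ}
    (hg : HasDerivAt g g' (‖Q - P‖ ^ 2)) :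
    HasFDerivAt (fun Q' : E2 => g (‖Q' - P‖ ^ 2)) (g' • (2 • (innerSL ℝ (Q - P)))) Q :=
  hg.comp_hasFDerivAt Q (hasFDerivAt_S P Q)

lemma hasFDerivAt_coord (P Q : E2) (l : Fin 2) :
    HasFDerivAt (fun Q' : E2 => 2 * ((Q' - P) l))
      ((2:ℝ) • (EuclideanSpace.proj l : E2 →L[ℝ] ℝ)) Q := by
  have h := (EuclideanSpace.proj l : E2 →L[ℝ] ℝ).hasFDerivAt.comp Q
    ((hasFDerivAt_id Q).sub_const P)
  simpa using h.const_mul 2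

lemma hG {c t : ℝ} (ht : 0 < t) :
    HasDerivAt (fun t => t ^ 2 * (c + (1/64) * Real.log t))
      (2 * t * (c + (1/64) * Real.log t) + t/64) t := by
  have hl := Real.hasDerivAt_log ht.ne'
  have := (hasDerivAt_pow 2 t).mul ((hasDerivAt_const t c).add (hl.const_mul (1/64)))
  exact this.congr_deriv (by simp only [Pi.add_apply]; field_simp; ring)

lemma hG1 {c t : ℝ} (ht : 0 < t) :
    HasDerivAt (fun t => 2 * t * (c + (1/64) * Real.log t) + t/64)
      (2 * (c + (1/64) * Real.log t) + 3/64) t := by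
  have hl := Real.hasDerivAt_log ht.ne'
  have := (((hasDerivAt_id t).const_mul 2).mul
      ((hasDerivAt_const t c).add (hl.const_mul (1/64)))).add ((hasDerivAt_id t).div_const 64)
  exact this.congr_deriv (by simp only [Pi.add_apply, id]; field_simp; ring)

lemma hG2 {c t : ℝ} (ht : 0 < t) :
    HasDerivAt (fun t => 2 * (c + (1/64) * Real.log t) + 3/64) (1/(32*t)) t := by
  have hl := Real.hasDerivAt_log ht.ne'
  have := (((hasDerivAt_const t c).add (hl.const_mul (1/64))).const_mul 2).add_const (3/64)
  exact this.congr_deriv (by field_simp; ring)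

lemma hH {a t : ℝ} (ht : 0 < t) :
    HasDerivAt (fun t => t * (a - (1/4) * Real.log t)) (a - (1/4) * Real.log t - 1/4) t := by
  have hl := Real.hasDerivAt_log ht.ne'
  have := (hasDerivAt_id t).mul ((hasDerivAt_const t a).sub (hl.const_mul (1/4)))
  exact this.congr_deriv (by simp only [Pi.sub_apply, id]; field_simp; ring)

lemma S_pos {P Q : E2} (hQ : Q ≠ P) : 0 < ‖Q - P‖ ^ 2 := by
  exact pow_pos (norm_pos_iff.mpr (sub_ne_zero.mpr hQ)) 2

-- Step 1: quartic rewritten through S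
lemma psi_eq (P : E2) (c : ℝ) :
    (fun Q'' : E2 => ‖Q'' - P‖ ^ 4 * (c + (1/32) * Real.log ‖Q'' - P‖)) =
      fun Q'' : E2 => (‖Q'' - P‖ ^ 2) ^ 2 * (c + (1/64) * Real.log (‖Q'' - P‖ ^ 2)) := by
  funext Q''
  rw [Real.log_pow]
  push_cast
  ring

-- Step 2: first partial of psi
lemma pd_psi (P : E2) (c : ℝ) (j : Fin 2) (Q : E2) (hQ : Q ≠ P) :
    pd2 (fun Q'' : E2 => ‖Q'' - P‖ ^ 4 * (c + (1/32) * Real.log ‖Q'' - P‖)) j Q =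
      (2 * (‖Q - P‖ ^ 2) * (c + (1/64) * Real.log (‖Q - P‖ ^ 2)) + (‖Q - P‖ ^ 2)/64) *
        (2 * (Q - P) j) := by
  rw [psi_eq]
  have h := hasFDerivAt_comp_S P Q (hG (c := c) (S_pos hQ))
  rw [pd2, h.fderiv, ContinuousLinearMap.smul_apply, apply_single, smul_eq_mul]
end helpers

section helpers2
local notation "E2" => EuclideanSpace ℝ (Fin 2)

lemma pdpd_psi (P : E2) (c : ℝ) (j k : Fin 2) (Q : E2) (hQ : Q ≠ P) :
    pd2 (fun Q' : E2 =>
        pd2 (fun Q'' : E2 => ‖Q'' - P‖ ^ 4 * (c + (1/32) * Real.log ‖Q'' - P‖)) j Q') k Q =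
      (2 * (‖Q - P‖ ^ 2) * (c + (1/64) * Real.log (‖Q - P‖ ^ 2)) + (‖Q - P‖ ^ 2)/64) *
          (2 * (if j = k then (1:ℝ) else 0)) +
        (2 * (Q - P) j) *
          ((2 * (c + (1/64) * Real.log (‖Q - P‖ ^ 2)) + 3/64) * (2 * (Q - P) k)) := by
  have heq : (fun Q' : E2 =>
      pd2 (fun Q'' : E2 => ‖Q'' - P‖ ^ 4 * (c + (1/32) * Real.log ‖Q'' - P‖)) j Q') =ᶠ[nhds Q]
      (fun Q' : E2 =>
        (2 * (‖Q' - P‖ ^ 2) * (c + (1/64) * Real.log (‖Q' - P‖ ^ 2)) + (‖Q' - P‖ ^ 2)/64) *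
          (2 * (Q' - P) j)) :=
    (eventually_ne_nhds hQ).mono (fun Q' h => pd_psi P c j Q' h)
  rw [pd2, heq.fderiv_eq]
  have hA := hasFDerivAt_comp_S P Q (hG1 (c := c) (S_pos hQ))
  have hB := hasFDerivAt_coord P Q j
  erw [(hA.mul hB).fderiv]
  simp only [ContinuousLinearMap.add_apply, ContinuousLinearMap.smul_apply, smul_eq_mul]
  have hpj : (EuclideanSpace.proj j : (EuclideanSpace ℝ (Fin 2)) →L[ℝ] ℝ)
      (EuclideanSpace.single k 1) = if j = k then (1:ℝ) else 0 := by
    simp [EuclideanSpace.single_apply]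
  rw [hpj]
  simp only [innerSL_apply_apply, EuclideanSpace.inner_single_right, map_one, conj_trivial,
    EuclideanSpace.single_apply, smul_eq_mul, nsmul_eq_mul, Nat.cast_ofNat]
  ring_nf
end helpers2

section helpers3
local notation "E2" => EuclideanSpace ℝ (Fin 2)

lemma div_term (P : E2) (a c : ℝ) (j k : Fin 2) (Q : E2) (hQ : Q ≠ P) :
    pd2 (Hac P a c k j) k Q =
      (if k = j then (1:ℝ) else 0) *
          ((a - (1/4) * Real.log (‖Q - P‖^2) - 1/4) * (2 * (Q - P) k))
      + ((2 * (c + (1/64) * Real.log (‖Q - P‖^2)) + 3/64) * (2 * (Q - P) k)) *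
          (2 * (if j = k then (1:ℝ) else 0))
      + ((2 * (Q - P) j) * ((2 * (c + (1/64) * Real.log (‖Q - P‖^2)) + 3/64) * 2
            + (2 * (Q - P) k) * ((1/(32 * ‖Q - P‖^2)) * (2 * (Q - P) k)))
         + ((2 * (c + (1/64) * Real.log (‖Q - P‖^2)) + 3/64) * (2 * (Q - P) k)) *
             (2 * (if j = k then (1:ℝ) else 0))) := by
  have heq : Hac P a c k j =ᶠ[nhds Q] (fun Q' : E2 =>
      (if k = j then (1:ℝ) else 0) * (‖Q' - P‖^2 * (a - (1/4) * Real.log (‖Q' - P‖^2)))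
      + ((2 * ‖Q' - P‖^2 * (c + (1/64) * Real.log (‖Q' - P‖^2)) + ‖Q' - P‖^2/64) *
            (2 * (if j = k then (1:ℝ) else 0))
         + (2 * (Q' - P) j) *
            ((2 * (c + (1/64) * Real.log (‖Q' - P‖^2)) + 3/64) * (2 * (Q' - P) k)))) := by
    refine (eventually_ne_nhds hQ).mono (fun Q' h => ?_)
    rw [Hac, pdpd_psi P c j k Q' h]
    simp only [Real.log_pow]
    push_cast
    ring
  rw [pd2, heq.fderiv_eq]
  have hs := S_pos hQ
  have h1 := (hasFDerivAt_comp_S P Q (hH (a := a) hs)).const_mul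
    (if k = j then (1:ℝ) else 0)
  have h2 := (hasFDerivAt_comp_S P Q (hG1 (c := c) hs)).mul_const
    (2 * (if j = k then (1:ℝ) else 0))
  have h3 := (hasFDerivAt_coord P Q j).mul
    ((hasFDerivAt_comp_S P Q (hG2 (c := c) hs)).mul (hasFDerivAt_coord P Q k))
  erw [(h1.add (h2.add h3)).fderiv]
  have hpj : ∀ l m : Fin 2, (EuclideanSpace.proj l : (EuclideanSpace ℝ (Fin 2)) →L[ℝ] ℝ)
      (EuclideanSpace.single m 1) = if l = m then (1:ℝ) else 0 := by
    intro l m; simp [EuclideanSpace.single_apply]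
  simp only [ContinuousLinearMap.add_apply, ContinuousLinearMap.smul_apply, smul_eq_mul,
    innerSL_apply_apply, EuclideanSpace.inner_single_right, map_one, conj_trivial, hpj,
    nsmul_eq_mul, Nat.cast_ofNat]
  simp only [if_true, one_mul, mul_one, Pi.mul_apply, Pi.add_apply]
  ring
end helpers3

/-- The divergence of the j-th column of the parameterized family satisfies
∑_k ∂H̃^{a,c}_{kj}/∂q_k = (2a + 32c + 1/2) R_j for all Q ≠ P; in particular the column
is divergence-free for all Q ≠ P if and only if a + 16c = −1/4. -/
theorem twoD_parameterized_divergence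
    (P : EuclideanSpace ℝ (Fin 2)) (j : Fin 2) (a c : ℝ) :
    (∀ Q : EuclideanSpace ℝ (Fin 2), Q ≠ P →
      (∑ k : Fin 2, pd2 (Hac P a c k j) k Q) = (2 * a + 32 * c + 1 / 2) * (Q - P) j) ∧
    ((∀ Q : EuclideanSpace ℝ (Fin 2), Q ≠ P →
        (∑ k : Fin 2, pd2 (Hac P a c k j) k Q) = 0) ↔ a + 16 * c = -(1 / 4)) := by
  have key : ∀ Q : EuclideanSpace ℝ (Fin 2), Q ≠ P →
      (∑ k : Fin 2, pd2 (Hac P a c k j) k Q) = (2 * a + 32 * c + 1 / 2) * (Q - P) j := by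
    intro Q hQ
    rw [Fin.sum_univ_two, div_term P a c j 0 Q hQ, div_term P a c j 1 Q hQ]
    have hsum : ‖Q - P‖ ^ 2 = (Q - P) 0 ^ 2 + (Q - P) 1 ^ 2 := by
      rw [EuclideanSpace.norm_eq, Real.sq_sqrt (by positivity)]
      simp [Fin.sum_univ_two, sq_abs]
    have hs0 : (Q - P) 0 ^ 2 + (Q - P) 1 ^ 2 ≠ 0 := hsum ▸ (S_pos hQ).ne'
    rw [hsum]
    have hj2 : j = 0 ∨ j = 1 := by omega
    rcases hj2 with rfl | rfl <;> simp only [reduceIte, Fin.isValue, Fin.reduceEq] <;>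
      · obtain ⟨x, hx⟩ : ∃ x, (Q - P) 0 = x := ⟨_, rfl⟩
        obtain ⟨y, hy⟩ : ∃ y, (Q - P) 1 = y := ⟨_, rfl⟩
        rw [hx, hy] at hs0 ⊢
        field_simp
        ring
  refine ⟨key, ?_, ?_⟩
  · intro h
    have hv : EuclideanSpace.single j (1:ℝ) ≠ 0 := by
      intro h0
      have h1 : (EuclideanSpace.single j (1:ℝ)) j = 0 := by rw [h0]; rfl
      simp [EuclideanSpace.single_apply] at h1
    have hQ : P + EuclideanSpace.single j 1 ≠ P := by
      intro hc
      exact hv (by simpa using congrArg (fun v => v - P) hc)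
    have h2 := h _ hQ
    rw [key _ hQ] at h2
    have hj : ((P + EuclideanSpace.single j (1:ℝ) - P : EuclideanSpace ℝ (Fin 2))) j = 1 := by
      rw [add_sub_cancel_left]
      simp [EuclideanSpace.single_apply]
    rw [hj, mul_one] at h2
    linarith
  · intro h Q hQ
    rw [key Q hQ]
    have : 2 * a + 32 * c + 1 / 2 = 0 := by linarith
    rw [this, zero_mul]
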